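/- Let α, β be quadratic elements of the algebraic closure of F_q(T), with minimal polynomials P_α(X) = A(X−α)(X−α') and P_β(X) = B(X−β)(X−β'). If α ≠ α' and P_α(X) ≠ P_β(X), then |α − β| ≥ max(1, |α − α'|^{−1}) · H(α)^{−2} · H(β)^{−2}. -/

import Mathlib

open Polynomial Filter
open scoped ENNReal

noncomputable section

namespace Ooto

variable (Fq : Type) [Field Fq] [Fintype Fq]

/-- `F_q((T⁻¹))`, realized as formal Laurent series in the variable `X = T⁻¹`. -/
abbrev K := LaurentSeries Fq

/-- The element `T = X⁻¹` of `F_q((T⁻¹))`. -/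
def TT : K Fq := HahnSeries.single (-1 : ℤ) (1 : Fq)

/-- The natural embedding of `F_q[T]` into `F_q((T⁻¹))`, sending `T` to `T`. -/
def polyToK : Polynomial Fq →+* K Fq := Polynomial.eval₂RingHom HahnSeries.C (TT Fq)

open Classical in
/-- The absolute value on `F_q((T⁻¹))`: `|0| = 0` and `|ξ| = q^{-N}` where `N` is the order
of `ξ` as a series in `T⁻¹`. -/
def kabs (f : K Fq) : ℝ := if f = 0 then 0 else (Fintype.card Fq : ℝ) ^ (-f.order)

/-- A fixed algebraic closure of `F_q((T⁻¹))`. -/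
abbrev L := AlgebraicClosure (K Fq)

def toL : K Fq →+* L Fq := algebraMap (K Fq) (L Fq)

def φ : Polynomial Fq →+* L Fq := (toL Fq).comp (polyToK Fq)

/-- Evaluation of `P ∈ (F_q[T])[X]` at `ξ ∈ F_q((T⁻¹))`. -/
def evalK (P : Polynomial (Polynomial Fq)) (ξ : K Fq) : K Fq :=
  Polynomial.eval₂ (polyToK Fq) ξ P

/-- Evaluation of `P ∈ (F_q[T])[X]` at a point of the algebraic closure. -/
def evalL (P : Polynomial (Polynomial Fq)) (α : L Fq) : L Fq :=
  Polynomial.eval₂ (φ Fq) α P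

/-- Height of a polynomial over `F_q[T]`: the maximum of the absolute values of its
coefficients. -/
def Hpoly (P : Polynomial (Polynomial Fq)) : ℝ := ⨆ i : ℕ, kabs Fq (polyToK Fq (P.coeff i))

/-- `P` is the minimal polynomial of `α`: a non-constant irreducible primitive polynomial in
`(F_q[T])[X]` whose leading coefficient is monic in `T`, vanishing at `α`. -/
def IsMinPolyOf (P : Polynomial (Polynomial Fq)) (α : L Fq) : Prop :=
  0 < P.natDegree ∧ Irreducible P ∧ P.IsPrimitive ∧ (P.leadingCoeff).Monic ∧ evalL Fq P α = 0

/-- `α` is algebraic over `F_q(T)`. -/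
def IsAlgElem (α : L Fq) : Prop := ∃ P, IsMinPolyOf Fq P α

open Classical in
/-- The minimal polynomial of an algebraic element (junk value `0` otherwise). -/
def minPolyPrim (α : L Fq) : Polynomial (Polynomial Fq) :=
  if h : IsAlgElem Fq α then h.choose else 0

/-- Degree of an algebraic element. -/
def degAlg (α : L Fq) : ℕ := (minPolyPrim Fq α).natDegree

/-- Height of an algebraic element. -/
def heightAlg (α : L Fq) : ℝ := Hpoly Fq (minPolyPrim Fq α)

/-- Inseparable degree of a polynomial `P ∈ (F_q[T])[X]`: the largest power `f = p^j` of the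
characteristic such that `P(X) = R(X^f)` for some `R`. -/
def insepDeg (P : Polynomial (Polynomial Fq)) : ℕ :=
  (ringChar Fq) ^ sSup {j : ℕ | ∃ R : Polynomial (Polynomial Fq),
    P = R.comp (Polynomial.X ^ (ringChar Fq) ^ j)}

/-- Inseparable degree of an algebraic element. -/
def insepAlg (α : L Fq) : ℕ := insepDeg Fq (minPolyPrim Fq α)

/-- `α'` is the Galois conjugate of the quadratic element `α` (equal to `α` itself in the
inseparable case): the minimal polynomial of `α` factors as `A(X - α)(X - α')`. -/
def IsConjOf (α' α : L Fq) : Prop :=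
  (minPolyPrim Fq α).natDegree = 2 ∧
  (minPolyPrim Fq α).map (φ Fq) =
    Polynomial.C (φ Fq (minPolyPrim Fq α).leadingCoeff) *
      (Polynomial.X - Polynomial.C α) * (Polynomial.X - Polynomial.C α')

/-- `v` is an absolute value on the algebraic closure of `F_q((T⁻¹))` extending `kabs`
(such an extension exists and is unique). -/
structure IsAbsExt (v : L Fq → ℝ) : Prop where
  eq_zero_iff : ∀ x, v x = 0 ↔ x = 0
  map_mul : ∀ x y, v (x * y) = v x * v y
  add_le : ∀ x y, v (x + y) ≤ max (v x) (v y)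
  nonneg : ∀ x, 0 ≤ v x
  extends_kabs : ∀ f : K Fq, v (toL Fq f) = kabs Fq f

/-- The exponent `w_n(ξ)`: the supremum of the real numbers `w` such that
`0 < |P(ξ)| ≤ H(P)^{-w}` for infinitely many `P ∈ (F_q[T])[X]` of degree at most `n`. -/
def wExp (n : ℕ) (ξ : K Fq) : EReal :=
  sSup {x : EReal | ∃ w : ℝ, x = (w : EReal) ∧
    {P : Polynomial (Polynomial Fq) | P.natDegree ≤ n ∧ 0 < kabs Fq (evalK Fq P ξ) ∧
      kabs Fq (evalK Fq P ξ) ≤ Hpoly Fq P ^ (-w)}.Infinite}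

/-- The exponent `w_n^*(ξ)`: the supremum of the real numbers `w` such that
`0 < |ξ - α| ≤ H(α)^{-w-1}` for infinitely many algebraic `α` of degree at most `n`. -/
def wStarExp (v : L Fq → ℝ) (n : ℕ) (ξ : K Fq) : EReal :=
  sSup {x : EReal | ∃ w : ℝ, x = (w : EReal) ∧
    {α : L Fq | IsAlgElem Fq α ∧ degAlg Fq α ≤ n ∧ 0 < v (toL Fq ξ - α) ∧
      v (toL Fq ξ - α) ≤ heightAlg Fq α ^ (-w - 1)}.Infinite}

/-- `pSeq a n = p_{n-1}`, the numerators of the convergents of `[a 0; a 1, a 2, …]`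
(with `p_{-1} = 1`). -/
def pSeq (a : ℕ → Polynomial Fq) : ℕ → Polynomial Fq
  | 0 => 1
  | 1 => a 0
  | (n+2) => a (n+1) * pSeq a (n+1) + pSeq a n

/-- `qSeq a n = q_{n-1}`, the denominators of the convergents of `[a 0; a 1, a 2, …]`
(with `q_{-1} = 0`). -/
def qSeq (a : ℕ → Polynomial Fq) : ℕ → Polynomial Fq
  | 0 => 0
  | 1 => 1
  | (n+2) => a (n+1) * qSeq a (n+1) + qSeq a n

/-- `ξ` has continued fraction expansion `[a 0; a 1, a 2, …]`: each partial quotient `a n`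
(`n ≥ 1`) has degree at least one and `|ξ - p_n/q_n| = |q_n|⁻¹|q_{n+1}|⁻¹` for all `n ≥ 0`. -/
def IsCFOf (ξ : K Fq) (a : ℕ → Polynomial Fq) : Prop :=
  (∀ n, 1 ≤ n → 1 ≤ (a n).natDegree) ∧
  ∀ n : ℕ,
    kabs Fq (ξ - polyToK Fq (pSeq Fq a (n+1)) / polyToK Fq (qSeq Fq a (n+1))) =
      (kabs Fq (polyToK Fq (qSeq Fq a (n+1))) * kabs Fq (polyToK Fq (qSeq Fq a (n+2))))⁻¹

/-- The sequence of partial quotients of `[0; b 0, b 1, b 2, …]`. -/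
def cfA (b : ℕ → Polynomial Fq) : ℕ → Polynomial Fq := fun n => if n = 0 then 0 else b (n - 1)

/-- `qden b n` is the denominator `q_n` of the `n`-th convergent of `[0; b 0, b 1, …]`. -/
def qden (b : ℕ → Polynomial Fq) (n : ℕ) : Polynomial Fq := qSeq Fq (cfA Fq b) (n + 1)

/-- `V^w` for a finite word `V` and a real `w ≥ 0`: `⌊w⌋` copies of `V` followed by the prefix
of `V` of length `⌈(w - ⌊w⌋)|V|⌉`. -/
def wordPow {A : Type*} (V : List A) (w : ℝ) : List A :=
  (List.replicate ⌊w⌋₊ V).flatten ++ V.take ⌈(w - ⌊w⌋₊) * V.length⌉₊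

/-- The finite word `l` is a prefix of the infinite word `b`. -/
def IsPrefixOfSeq {A : Type*} (l : List A) (b : ℕ → A) : Prop :=
  ∀ (i : ℕ) (h : i < l.length), l.get ⟨i, h⟩ = b i

/-- Condition `(*)_ρ` for an infinite word. -/
def SatisfiesCond {A : Type*} (b : ℕ → A) (ρ : ℝ) : Prop :=
  ∃ (U V : ℕ → List A) (w : ℕ → ℝ),
    (∀ n, V n ≠ []) ∧ (∀ n, 0 ≤ w n) ∧
    (∀ n, IsPrefixOfSeq (U n ++ wordPow (V n) (w n)) b) ∧
    (∀ n, ρ * (((U n).length + (V n).length : ℕ) : ℝ) ≤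
      (((U n).length + (wordPow (V n) (w n)).length : ℕ) : ℝ)) ∧
    StrictMono fun n => (wordPow (V n) (w n)).length

/-- The Diophantine exponent of an infinite word: the supremum of the `ρ` such that the word
satisfies Condition `(*)_ρ`. -/
def dioExp {A : Type*} (b : ℕ → A) : EReal :=
  sSup {x : EReal | ∃ ρ : ℝ, x = (ρ : EReal) ∧ SatisfiesCond b ρ}

/-- The complexity function: the number of distinct blocks of `n` consecutive letters. -/
def complexity {A : Type*} (b : ℕ → A) (n : ℕ) : ℕ∞ :=
  {w : Fin n → A | ∃ i : ℕ, ∀ k : Fin n, w k = b (i + k)}.encard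

/-- The infinite word `b` is ultimately periodic. -/
def UltimatelyPeriodic {A : Type*} (b : ℕ → A) : Prop :=
  ∃ N T : ℕ, 0 < T ∧ ∀ n, N ≤ n → b (n + T) = b n


lemma TT_pow (n : ℕ) : (TT Fq) ^ n = HahnSeries.single (-(n:ℤ)) (1 : Fq) := by
  induction n with
  | zero => simp
  | succ n ih =>
    rw [pow_succ, ih, TT, HahnSeries.single_mul_single, mul_one]
    congr 1
    push_cast
    ring

lemma polyToK_eq_sum (p : Polynomial Fq) :
    polyToK Fq p = ∑ i ∈ Finset.range (p.natDegree + 1),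
      HahnSeries.single (-(i:ℤ)) (p.coeff i) := by
  have h : polyToK Fq p = Polynomial.eval₂ HahnSeries.C (TT Fq) p := rfl
  rw [h, Polynomial.eval₂_eq_sum_range]
  refine Finset.sum_congr rfl fun i _ => ?_
  rw [TT_pow, HahnSeries.C_apply, HahnSeries.single_mul_single, zero_add, mul_one]

lemma coeff_sum {ι : Type*} (s : Finset ι) (f : ι → K Fq) (c : ℤ) :
    (∑ i ∈ s, f i).coeff c = ∑ i ∈ s, (f i).coeff c := by
  classical
  induction s using Finset.induction_on with
  | empty => simp [HahnSeries.coeff_zero]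
  | @insert a s hx ih => rw [Finset.sum_insert hx, Finset.sum_insert hx, HahnSeries.coeff_add, ih]

lemma polyToK_coeff (p : Polynomial Fq) (j : ℕ) :
    (polyToK Fq p).coeff (-(j:ℤ)) = p.coeff j := by
  rw [polyToK_eq_sum, coeff_sum]
  simp only [HahnSeries.coeff_single]
  by_cases hj : j ≤ p.natDegree
  · rw [Finset.sum_eq_single j]
    · simp
    · intro i _ hij
      rw [if_neg]
      intro h
      exact hij (by omega)
    · intro h
      exact absurd (Finset.mem_range.mpr (by omega)) h
  · rw [Finset.sum_eq_zero, Polynomial.coeff_eq_zero_of_natDegree_lt (by omega)]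
    intro i hi
    rw [Finset.mem_range] at hi
    rw [if_neg]
    intro h
    omega

lemma polyToK_coeff_eq_zero (p : Polynomial Fq) (k : ℤ) (hk : k < -(p.natDegree : ℤ)) :
    (polyToK Fq p).coeff k = 0 := by
  rw [polyToK_eq_sum, coeff_sum]
  refine Finset.sum_eq_zero fun i hi => ?_
  rw [Finset.mem_range] at hi
  rw [HahnSeries.coeff_single, if_neg]
  intro h
  omega

lemma polyToK_ne_zero {p : Polynomial Fq} (hp : p ≠ 0) : polyToK Fq p ≠ 0 := by
  intro h
  have := polyToK_coeff Fq p p.natDegree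
  rw [h] at this
  simp only [HahnSeries.coeff_zero] at this
  exact hp (Polynomial.leadingCoeff_eq_zero.mp this.symm)

lemma polyToK_injective : Function.Injective (polyToK Fq) := by
  intro a b h
  by_contra hne
  exact polyToK_ne_zero Fq (sub_ne_zero.mpr hne) (by rw [map_sub, h, sub_self])

lemma order_polyToK {p : Polynomial Fq} (hp : p ≠ 0) :
    (polyToK Fq p).order = -(p.natDegree : ℤ) := by
  have hne := polyToK_ne_zero Fq hp
  have hle : (polyToK Fq p).order ≤ -(p.natDegree : ℤ) :=
    HahnSeries.order_le_of_coeff_ne_zero (by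
      rw [polyToK_coeff]
      exact fun h => hp (Polynomial.leadingCoeff_eq_zero.mp h))
  rcases lt_or_eq_of_le hle with h | h
  · exact absurd (polyToK_coeff_eq_zero Fq p _ h) (mt HahnSeries.coeff_order_eq_zero.mp hne)
  · exact h

lemma kabs_polyToK {p : Polynomial Fq} (hp : p ≠ 0) :
    kabs Fq (polyToK Fq p) = (Fintype.card Fq : ℝ) ^ (p.natDegree : ℕ) := by
  rw [kabs, if_neg (polyToK_ne_zero Fq hp), order_polyToK Fq hp, neg_neg, zpow_natCast]

lemma one_le_kabs_polyToK {p : Polynomial Fq} (hp : p ≠ 0) :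
    1 ≤ kabs Fq (polyToK Fq p) := by
  rw [kabs_polyToK Fq hp]
  exact one_le_pow₀ (by exact_mod_cast Nat.one_le_iff_ne_zero.mpr Fintype.card_ne_zero)


/-- Abstract ultrametric "Gauss" computation. -/
lemma gauss_max {s t u : ℝ} (hs : 0 ≤ s) (ht : 0 ≤ t) (hu0 : 0 ≤ u)
    (hu : u ≤ max s t) (hu' : s ≠ t → u = max s t) :
    max 1 (max u (s * t)) = max 1 s * max 1 t := by
  rcases le_or_gt s 1 with h1 | h1 <;> rcases le_or_gt t 1 with h2 | h2
  · rw [max_eq_left h1, max_eq_left h2, mul_one, max_eq_left]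
    refine max_le (hu.trans (max_le h1 h2)) (by nlinarith)
  · have hst : s ≠ t := by linarith
    rw [max_eq_left h1, max_eq_right h2.le, one_mul, hu' hst,
      max_eq_right (by linarith : s ≤ t), max_eq_left (by nlinarith : s * t ≤ t),
      max_eq_right h2.le]
  · have hst : s ≠ t := by linarith
    rw [max_eq_right h1.le, max_eq_left h2, mul_one, hu' hst,
      max_eq_left (by linarith : t ≤ s), max_eq_left (by nlinarith : s * t ≤ s),
      max_eq_right h1.le]
  · have h3 : u ≤ s * t := hu.trans (by
      rcases le_total s t with h | h
      · rw [max_eq_right h]; nlinarith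
      · rw [max_eq_left h]; nlinarith)
    rw [max_eq_right h1.le, max_eq_right h2.le, max_eq_right h3,
      max_eq_right (by nlinarith : (1:ℝ) ≤ s * t)]


section Vlem

variable {Fq} {v : L Fq → ℝ} (hv : IsAbsExt Fq v)
include hv

lemma v_zero : v 0 = 0 := (hv.eq_zero_iff 0).mpr rfl

lemma v_one : v 1 = 1 := by
  have h := hv.map_mul 1 1
  rw [mul_one] at h
  have h1 : v 1 ≠ 0 := fun h0 => one_ne_zero ((hv.eq_zero_iff 1).mp h0)
  have := mul_right_cancel₀ h1 (h.symm.trans (one_mul (v 1)).symm)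
  linarith [this]

lemma v_pos {x : L Fq} (hx : x ≠ 0) : 0 < v x :=
  lt_of_le_of_ne (hv.nonneg x) (fun h0 => hx ((hv.eq_zero_iff x).mp h0.symm))

lemma v_neg (x : L Fq) : v (-x) = v x := by
  have hm : v (-1 : L Fq) = 1 := by
    have h := hv.map_mul (-1) (-1)
    rw [neg_mul_neg, one_mul, v_one hv] at h
    have hnn := hv.nonneg (-1 : L Fq)
    nlinarith
  calc v (-x) = v ((-1) * x) := by rw [neg_one_mul]
  _ = v (-1) * v x := hv.map_mul _ _
  _ = v x := by rw [hm, one_mul]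

lemma v_sub_le (x y : L Fq) : v (x - y) ≤ max (v x) (v y) := by
  rw [sub_eq_add_neg]
  exact (hv.add_le x (-y)).trans (by rw [v_neg hv])

lemma v_add_eq {x y : L Fq} (h : v x < v y) : v (x + y) = v y := by
  refine le_antisymm ((hv.add_le x y).trans (by rw [max_eq_right h.le])) ?_
  by_contra hlt
  push_neg at hlt
  have := v_sub_le hv (x + y) x
  rw [add_sub_cancel_left] at this
  rcases max_cases (v (x+y)) (v x) with ⟨he, _⟩ | ⟨he, _⟩ <;> rw [he] at this <;> linarith

lemma v_phi (p : Polynomial Fq) : v (φ Fq p) = kabs Fq (polyToK Fq p) :=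
  hv.extends_kabs (polyToK Fq p)

lemma one_le_v_phi {p : Polynomial Fq} (hp : p ≠ 0) : 1 ≤ v (φ Fq p) := by
  rw [v_phi hv]
  exact one_le_kabs_polyToK Fq hp

lemma phi_ne_zero {p : Polynomial Fq} (hp : p ≠ 0) : φ Fq p ≠ 0 := by
  intro h
  have := (toL Fq).injective (h.trans (map_zero (toL Fq)).symm : toL Fq (polyToK Fq p) = toL Fq 0)
  exact polyToK_ne_zero Fq hp this

end Vlem


lemma minpoly_primitive_unique {P Q : Polynomial (Polynomial Fq)}
    (hPirr : Irreducible P) (hPprim : P.IsPrimitive) (hPlc : P.leadingCoeff.Monic)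
    (hPdeg : 0 < P.natDegree)
    (hQirr : Irreducible Q) (hQprim : Q.IsPrimitive) (hQlc : Q.leadingCoeff.Monic)
    {γ : L Fq} (hP : evalL Fq P γ = 0) (hQ : evalL Fq Q γ = 0) : P = Q := by
  classical
  letI : NormalizationMonoid (Polynomial Fq) := (UniqueFactorizationMonoid.strongNormalizationMonoid (α := Polynomial Fq)).toNormalizationMonoid
  letI : NormalizedGCDMonoid (Polynomial Fq) := UniqueFactorizationMonoid.toNormalizedGCDMonoid _
  have hinj : Function.Injective (algebraMap (Polynomial Fq) (RatFunc Fq)) := IsFractionRing.injective _ _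
  set ψ : RatFunc Fq →+* L Fq := (toL Fq).comp (IsFractionRing.lift (polyToK_injective Fq)) with hψdef
  have hψφ : ψ.comp (algebraMap (Polynomial Fq) (RatFunc Fq)) = φ Fq := RingHom.ext fun c => by
    rw [RingHom.comp_apply, hψdef, RingHom.comp_apply, IsFractionRing.lift_algebraMap]
    rfl
  set P' := P.map (algebraMap (Polynomial Fq) (RatFunc Fq)) with hP'def
  set Q' := Q.map (algebraMap (Polynomial Fq) (RatFunc Fq)) with hQ'def
  have hP'irr : Irreducible P' :=
    (hPprim.irreducible_iff_irreducible_map_fraction_map (K := RatFunc Fq)).mp hPirr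
  have hP'root : Polynomial.eval₂ ψ γ P' = 0 := by
    rw [hP'def, Polynomial.eval₂_map, hψφ]; exact hP
  have hQ'root : Polynomial.eval₂ ψ γ Q' = 0 := by
    rw [hQ'def, Polynomial.eval₂_map, hψφ]; exact hQ
  have hP'0 : P' ≠ 0 := (Polynomial.map_ne_zero_iff hinj).mpr hPirr.ne_zero
  set g := EuclideanDomain.gcd P' Q' with hgdef
  have hgP : g ∣ P' := EuclideanDomain.gcd_dvd_left _ _
  have hgQ : g ∣ Q' := EuclideanDomain.gcd_dvd_right _ _
  have hgroot : Polynomial.eval₂ ψ γ g = 0 := by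
    rw [hgdef, EuclideanDomain.gcd_eq_gcd_ab P' Q']
    rw [Polynomial.eval₂_add, Polynomial.eval₂_mul, Polynomial.eval₂_mul, hP'root, hQ'root]
    ring
  have hgu : ¬ IsUnit g := by
    intro hu
    rcases Polynomial.isUnit_iff.mp hu with ⟨c, hcu, hcg⟩
    rw [← hcg, Polynomial.eval₂_C] at hgroot
    exact hcu.ne_zero (ψ.injective (by rw [hgroot, map_zero]))
  have hP'Q' : P' ∣ Q' := by
    obtain ⟨d, hd⟩ := hgP
    rcases hP'irr.isUnit_or_isUnit hd with h | h
    · exact absurd h hgu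
    · have : Associated g P' := ⟨h.unit, by rw [IsUnit.unit_spec, ← hd]⟩
      exact this.symm.dvd.trans hgQ
  obtain ⟨t', ht'⟩ := hP'Q'
  have hQ'irr : Irreducible Q' :=
    (hQprim.irreducible_iff_irreducible_map_fraction_map (K := RatFunc Fq)).mp hQirr
  have ht'u : IsUnit t' := (hQ'irr.isUnit_or_isUnit ht').resolve_left hP'irr.not_isUnit
  rcases Polynomial.isUnit_iff.mp ht'u with ⟨c, hcu, hct⟩
  have hlcP' : P'.leadingCoeff = (algebraMap (Polynomial Fq) (RatFunc Fq)) P.leadingCoeff :=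
    Polynomial.leadingCoeff_map_of_injective hinj P
  have hlcQ' : Q'.leadingCoeff = (algebraMap (Polynomial Fq) (RatFunc Fq)) Q.leadingCoeff :=
    Polynomial.leadingCoeff_map_of_injective hinj Q
  have hbc : (algebraMap (Polynomial Fq) (RatFunc Fq)) Q.leadingCoeff = (algebraMap (Polynomial Fq) (RatFunc Fq)) P.leadingCoeff * c := by
    rw [← hlcP', ← hlcQ', ht', ← hct, Polynomial.leadingCoeff_mul, Polynomial.leadingCoeff_C]
  have hkey' : Polynomial.C ((algebraMap (Polynomial Fq) (RatFunc Fq)) P.leadingCoeff) * Q' = Polynomial.C ((algebraMap (Polynomial Fq) (RatFunc Fq)) Q.leadingCoeff) * P' := by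
    rw [ht', ← hct, hbc, Polynomial.C_mul]
    ring
  have hkey : Polynomial.C P.leadingCoeff * Q = Polynomial.C Q.leadingCoeff * P := by
    apply Polynomial.map_injective (algebraMap (Polynomial Fq) (RatFunc Fq)) hinj
    rw [Polynomial.map_mul, Polynomial.map_mul, Polynomial.map_C, Polynomial.map_C]
    exact hkey'
  have hPprime : Prime P := (UniqueFactorizationMonoid.irreducible_iff_prime).mp hPirr
  have hdvd : P ∣ Polynomial.C P.leadingCoeff * Q := ⟨Polynomial.C Q.leadingCoeff, by
    rw [hkey]; ring⟩
  rcases hPprime.2.2 _ _ hdvd with h | h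
  · exfalso
    obtain ⟨t, ht⟩ := h
    have hlc0 : P.leadingCoeff ≠ 0 := hPlc.ne_zero
    have hC0 : Polynomial.C P.leadingCoeff ≠ 0 := by simpa using hlc0
    have ht0 : t ≠ 0 := by rintro rfl; rw [mul_zero] at ht; exact hC0 ht
    have := congrArg Polynomial.natDegree ht
    rw [Polynomial.natDegree_C, Polynomial.natDegree_mul hPirr.ne_zero ht0] at this
    omega
  · obtain ⟨t, ht⟩ := h
    rcases hQirr.isUnit_or_isUnit ht with h' | h'
    · exact absurd h' hPirr.not_isUnit
    · rcases Polynomial.isUnit_iff.mp h' with ⟨r, hru, hrt⟩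
      rcases Polynomial.isUnit_iff.mp hru with ⟨u, _, hur⟩
      have h1 : Q.leadingCoeff = P.leadingCoeff * r := by
        rw [ht, ← hrt, Polynomial.leadingCoeff_mul, Polynomial.leadingCoeff_C]
      have h2 : (P.leadingCoeff * r).leadingCoeff = 1 := by rw [← h1]; exact hQlc
      rw [Polynomial.leadingCoeff_mul, hPlc.leadingCoeff, one_mul, ← hur,
        Polynomial.leadingCoeff_C] at h2
      have hr1 : r = 1 := by rw [← hur, h2, map_one]
      rw [ht, ← hrt, hr1, map_one, mul_one]


lemma quad_eq {S : Type*} [CommRing S] (a x y : S) :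
    Polynomial.C a * (Polynomial.X - Polynomial.C x) * (Polynomial.X - Polynomial.C y) =
      Polynomial.C a * Polynomial.X ^ 2 + Polynomial.C (-(a * (x + y))) * Polynomial.X +
        Polynomial.C (a * x * y) := by
  simp only [Polynomial.C_neg, Polynomial.C_mul, Polynomial.C_add]
  ring

lemma quad_coeff0 {S : Type*} [CommRing S] (a x y : S) :
    (Polynomial.C a * (Polynomial.X - Polynomial.C x) * (Polynomial.X - Polynomial.C y)).coeff 0
      = a * x * y := by
  rw [quad_eq]
  simp

lemma quad_coeff1 {S : Type*} [CommRing S] (a x y : S) :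
    (Polynomial.C a * (Polynomial.X - Polynomial.C x) * (Polynomial.X - Polynomial.C y)).coeff 1
      = -(a * (x + y)) := by
  rw [quad_eq]
  simp

lemma quad_coeff2 {S : Type*} [CommRing S] (a x y : S) :
    (Polynomial.C a * (Polynomial.X - Polynomial.C x) * (Polynomial.X - Polynomial.C y)).coeff 2
      = a := by
  rw [quad_eq]
  simp [Polynomial.coeff_X, Polynomial.coeff_C]

lemma isMinPolyOf_minPolyPrim {α : L Fq} (h : IsAlgElem Fq α) :
    IsMinPolyOf Fq (minPolyPrim Fq α) α := by
  rw [minPolyPrim, dif_pos h]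
  exact h.choose_spec

section Height

variable {Fq} {v : L Fq → ℝ} (hv : IsAbsExt Fq v)
include hv

lemma v_sub_le_mul (x y : L Fq) : v (x - y) ≤ max 1 (v x) * max 1 (v y) := by
  refine (v_sub_le hv x y).trans (max_le ?_ ?_)
  · calc v x ≤ max 1 (v x) := le_max_right _ _
    _ = max 1 (v x) * 1 := (mul_one _).symm
    _ ≤ max 1 (v x) * max 1 (v y) := by
        have : (0:ℝ) ≤ max 1 (v x) := le_trans zero_le_one (le_max_left _ _)
        exact mul_le_mul_of_nonneg_left (le_max_left _ _) this
  · calc v y ≤ max 1 (v y) := le_max_right _ _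
    _ = 1 * max 1 (v y) := (one_mul _).symm
    _ ≤ max 1 (v x) * max 1 (v y) := by
        have : (0:ℝ) ≤ max 1 (v y) := le_trans zero_le_one (le_max_left _ _)
        exact mul_le_mul_of_nonneg_right (le_max_left _ _) this

/-- The non-archimedean Mahler/height identity for a quadratic polynomial. -/
lemma height_eq {P : Polynomial (Polynomial Fq)} {x y : L Fq}
    (hdeg : P.natDegree = 2)
    (hfac : P.map (φ Fq) = Polynomial.C (φ Fq P.leadingCoeff) *
      (Polynomial.X - Polynomial.C x) * (Polynomial.X - Polynomial.C y)) :
    Hpoly Fq P = v (φ Fq P.leadingCoeff) * (max 1 (v x) * max 1 (v y)) := by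
  have hc0 : φ Fq (P.coeff 0) = φ Fq P.leadingCoeff * x * y := by
    have := congrArg (fun r => Polynomial.coeff r 0) hfac
    simpa [Polynomial.coeff_map, quad_coeff0] using this
  have hc1 : φ Fq (P.coeff 1) = -(φ Fq P.leadingCoeff * (x + y)) := by
    have := congrArg (fun r => Polynomial.coeff r 1) hfac
    simpa [Polynomial.coeff_map, quad_coeff1] using this
  have hc2 : φ Fq (P.coeff 2) = φ Fq P.leadingCoeff := by
    have := congrArg (fun r => Polynomial.coeff r 2) hfac
    simpa [Polynomial.coeff_map, quad_coeff2] using this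
  set dA := v (φ Fq P.leadingCoeff) with hdA
  have hdA0 : 0 ≤ dA := hv.nonneg _
  -- the three coefficient absolute values
  have hv1 : v (φ Fq (P.coeff 1)) = dA * v (x + y) := by
    rw [hc1, v_neg hv, hv.map_mul]
  have hv0 : v (φ Fq (P.coeff 0)) = dA * (v x * v y) := by
    rw [hc0, hv.map_mul, hv.map_mul, mul_assoc]
  have hv2 : v (φ Fq (P.coeff 2)) = dA * 1 := by rw [hc2, mul_one]
  set m := dA * max 1 (max (v (x + y)) (v x * v y)) with hm
  have hbound : ∀ i : ℕ, kabs Fq (polyToK Fq (P.coeff i)) ≤ m := by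
    intro i
    rw [← v_phi hv]
    match i with
    | 0 =>
      rw [hv0, hm]
      exact mul_le_mul_of_nonneg_left ((le_max_right _ _).trans (le_max_right _ _)) hdA0
    | 1 =>
      rw [hv1, hm]
      exact mul_le_mul_of_nonneg_left ((le_max_left _ _).trans (le_max_right _ _)) hdA0
    | 2 =>
      rw [hv2, hm]
      exact mul_le_mul_of_nonneg_left (le_max_left _ _) hdA0
    | (n+3) =>
      rw [Polynomial.coeff_eq_zero_of_natDegree_lt (by omega), map_zero, v_zero hv, hm]
      exact mul_nonneg hdA0 (le_trans zero_le_one (le_max_left _ _))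
  have hbdd : BddAbove (Set.range fun i => kabs Fq (polyToK Fq (P.coeff i))) := by
    refine ⟨m, ?_⟩
    rintro r ⟨i, rfl⟩
    exact hbound i
  have hH : Hpoly Fq P = m := by
    refine le_antisymm (ciSup_le hbound) ?_
    rcases le_total (max (v (x+y)) (v x * v y)) 1 with h1 | h1
    · rw [hm, max_eq_left h1, mul_one, ← mul_one dA, ← hv2]
      rw [v_phi hv]
      exact le_ciSup hbdd 2
    · rw [hm, max_eq_right h1]
      rcases max_cases (v (x+y)) (v x * v y) with ⟨he, _⟩ | ⟨he, _⟩
      · rw [he, ← hv1, v_phi hv]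
        exact le_ciSup hbdd 1
      · rw [he, ← hv0, v_phi hv]
        exact le_ciSup hbdd 0
  rw [hH, hm]
  congr 1
  exact gauss_max (hv.nonneg x) (hv.nonneg y) (hv.nonneg _) (hv.add_le x y)
    (fun hne => by
      rcases hne.lt_or_gt with h | h
      · rw [max_eq_right h.le, ← v_add_eq hv h]
      · rw [max_eq_left h.le, add_comm, ← v_add_eq hv h])

end Height


lemma sq_ge_one' {x : ℝ} (h0 : 0 ≤ x) (h : 1 ≤ x * x) : 1 ≤ x := by nlinarith

lemma one_le_mul' {x y : ℝ} (hx : 1 ≤ x) (hy : 1 ≤ y) : 1 ≤ x * y := by nlinarith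

set_option maxHeartbeats 1600000 in
theorem stmt10 (Fq : Type) [Field Fq] [Fintype Fq]
    (v : L Fq → ℝ) (hv : IsAbsExt Fq v)
    (α α' β β' : L Fq) (hαalg : IsAlgElem Fq α) (hβalg : IsAlgElem Fq β)
    (hαconj : IsConjOf Fq α' α) (hβconj : IsConjOf Fq β' β)
    (hne : α ≠ α') (hPne : minPolyPrim Fq α ≠ minPolyPrim Fq β) :
    max 1 (v (α - α'))⁻¹ * heightAlg Fq α ^ (-(2 : ℝ)) * heightAlg Fq β ^ (-(2 : ℝ)) ≤
      v (α - β) := by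
  classical
  obtain ⟨hPdeg2, hfacP⟩ := hαconj
  obtain ⟨hQdeg2, hfacQ⟩ := hβconj
  have hPmin := isMinPolyOf_minPolyPrim Fq hαalg
  have hQmin := isMinPolyOf_minPolyPrim Fq hβalg
  set P := minPolyPrim Fq α with hPdef
  set Q := minPolyPrim Fq β with hQdef
  obtain ⟨hPdegpos, hPirr, hPprim, hPlc, hPev⟩ := hPmin
  obtain ⟨hQdegpos, hQirr, hQprim, hQlc, hQev⟩ := hQmin
  set A := P.leadingCoeff with hAdef
  set B := Q.leadingCoeff with hBdef
  have hA0 : A ≠ 0 := hPlc.ne_zero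
  have hB0 : B ≠ 0 := hQlc.ne_zero
  have hALne : φ Fq A ≠ 0 := phi_ne_zero hv hA0
  have hBLne : φ Fq B ≠ 0 := phi_ne_zero hv hB0
  -- evaluations
  have hevmap : ∀ (R : Polynomial (Polynomial Fq)) (z : L Fq),
      evalL Fq R z = (R.map (φ Fq)).eval z := fun R z => Polynomial.eval₂_eq_eval_map _
  have hQαval : evalL Fq Q α = φ Fq B * ((α - β) * (α - β')) := by
    rw [hevmap, hfacQ]
    simp only [Polynomial.eval_mul, Polynomial.eval_sub, Polynomial.eval_X, Polynomial.eval_C]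
    ring
  have hQα'val : evalL Fq Q α' = φ Fq B * ((α' - β) * (α' - β')) := by
    rw [hevmap, hfacQ]
    simp only [Polynomial.eval_mul, Polynomial.eval_sub, Polynomial.eval_X, Polynomial.eval_C]
    ring
  have hPα'zero : evalL Fq P α' = 0 := by
    rw [hevmap, hfacP]
    simp [Polynomial.eval_mul, Polynomial.eval_sub]
  -- non-vanishing
  have hQαne : evalL Fq Q α ≠ 0 := fun h => hPne
    (minpoly_primitive_unique Fq hPirr hPprim hPlc hPdegpos hQirr hQprim hQlc hPev h)
  have hQα'ne : evalL Fq Q α' ≠ 0 := fun h => hPne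
    (minpoly_primitive_unique Fq hPirr hPprim hPlc hPdegpos hQirr hQprim hQlc hPα'zero h)
  have hαβ : α ≠ β := fun h => hQαne (by rw [h]; exact hQev)
  -- coefficient relations
  have hc2P : φ Fq (P.coeff 2) = φ Fq A := by
    have := congrArg (fun r => Polynomial.coeff r 2) hfacP
    simpa [Polynomial.coeff_map, quad_coeff2] using this
  have hc1P : φ Fq (P.coeff 1) = -(φ Fq A * (α + α')) := by
    have := congrArg (fun r => Polynomial.coeff r 1) hfacP
    simpa [Polynomial.coeff_map, quad_coeff1] using this
  have hc0P : φ Fq (P.coeff 0) = φ Fq A * α * α' := by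
    have := congrArg (fun r => Polynomial.coeff r 0) hfacP
    simpa [Polynomial.coeff_map, quad_coeff0] using this
  have hc2Q : φ Fq (Q.coeff 2) = φ Fq B := by
    have := congrArg (fun r => Polynomial.coeff r 2) hfacQ
    simpa [Polynomial.coeff_map, quad_coeff2] using this
  have hc1Q : φ Fq (Q.coeff 1) = -(φ Fq B * (β + β')) := by
    have := congrArg (fun r => Polynomial.coeff r 1) hfacQ
    simpa [Polynomial.coeff_map, quad_coeff1] using this
  have hc0Q : φ Fq (Q.coeff 0) = φ Fq B * β * β' := by
    have := congrArg (fun r => Polynomial.coeff r 0) hfacQ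
    simpa [Polynomial.coeff_map, quad_coeff0] using this
  -- the resultant
  set Rr : Polynomial Fq :=
    P.coeff 2 * P.coeff 0 * Q.coeff 1 ^ 2 - Q.coeff 2 * P.coeff 0 * P.coeff 1 * Q.coeff 1
      - P.coeff 2 * P.coeff 1 * Q.coeff 0 * Q.coeff 1 + Q.coeff 2 * P.coeff 1 ^ 2 * Q.coeff 0
      + P.coeff 2 ^ 2 * Q.coeff 0 ^ 2 - 2 * P.coeff 2 * Q.coeff 2 * P.coeff 0 * Q.coeff 0
      + Q.coeff 2 ^ 2 * P.coeff 0 ^ 2 with hRrdef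
  have hRid : φ Fq Rr = φ Fq A * φ Fq A *
      ((φ Fq B * ((α - β) * (α - β'))) * (φ Fq B * ((α' - β) * (α' - β')))) := by
    rw [hRrdef]
    simp only [map_add, map_sub, map_mul, map_pow, map_ofNat]
    rw [hc2P, hc1P, hc0P, hc2Q, hc1Q, hc0Q]
    ring
  have hφRne : φ Fq Rr ≠ 0 := by
    rw [hRid, ← hQαval, ← hQα'val]
    exact mul_ne_zero (mul_ne_zero hALne hALne) (mul_ne_zero hQαne hQα'ne)
  have hRr0 : Rr ≠ 0 := fun h => hφRne (by rw [h, map_zero])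
  -- the discriminant
  set D : Polynomial Fq := P.coeff 1 ^ 2 - 4 * P.coeff 0 * P.coeff 2 with hDdef
  have hDid : φ Fq D = (φ Fq A * (α - α')) * (φ Fq A * (α - α')) := by
    rw [hDdef]
    simp only [map_sub, map_mul, map_pow, map_ofNat]
    rw [hc1P, hc0P, hc2P]
    ring
  have hD0 : D ≠ 0 := fun h => by
    have : φ Fq D = 0 := by rw [h, map_zero]
    rw [hDid] at this
    exact mul_ne_zero (mul_ne_zero hALne (sub_ne_zero.mpr hne))
      (mul_ne_zero hALne (sub_ne_zero.mpr hne)) this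
  -- abbreviations
  set dA := v (φ Fq A) with hdAdef
  set dB := v (φ Fq B) with hdBdef
  set Ma := max 1 (v α) with hMadef
  set Ma' := max 1 (v α') with hMa'def
  set Mb := max 1 (v β) with hMbdef
  set Mb' := max 1 (v β') with hMb'def
  set e1 := v (α - β) with he1def
  set e2 := v (α - β') with he2def
  set e3 := v (α' - β) with he3def
  set e4 := v (α' - β') with he4def
  set t := v (α - α') with htdef
  have h1dA : 1 ≤ dA := one_le_v_phi hv hA0
  have h1dB : 1 ≤ dB := one_le_v_phi hv hB0
  have h1Ma : (1:ℝ) ≤ Ma := le_max_left _ _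
  have h1Ma' : (1:ℝ) ≤ Ma' := le_max_left _ _
  have h1Mb : (1:ℝ) ≤ Mb := le_max_left _ _
  have h1Mb' : (1:ℝ) ≤ Mb' := le_max_left _ _
  have he1nn : 0 ≤ e1 := hv.nonneg _
  have he2nn : 0 ≤ e2 := hv.nonneg _
  have he3nn : 0 ≤ e3 := hv.nonneg _
  have he4nn : 0 ≤ e4 := hv.nonneg _
  have ht0 : 0 < t := v_pos hv (sub_ne_zero.mpr hne)
  have he1pos : 0 < e1 := v_pos hv (sub_ne_zero.mpr hαβ)
  -- heights
  set Ha := heightAlg Fq α with hHadef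
  set Hb := heightAlg Fq β with hHbdef
  have hHa : Ha = dA * (Ma * Ma') := height_eq hv hPdeg2 hfacP
  have hHb : Hb = dB * (Mb * Mb') := height_eq hv hQdeg2 hfacQ
  have mulge : ∀ x y : ℝ, 1 ≤ x → 1 ≤ y → 1 ≤ x * y := fun x y hx hy => one_le_mul' hx hy
  have hHa1 : 1 ≤ Ha := by rw [hHa]; exact mulge _ _ h1dA (mulge _ _ h1Ma h1Ma')
  have hHb1 : 1 ≤ Hb := by rw [hHb]; exact mulge _ _ h1dB (mulge _ _ h1Mb h1Mb')
  have hHapos : 0 < Ha := lt_of_lt_of_le one_pos hHa1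
  have hHbpos : 0 < Hb := lt_of_lt_of_le one_pos hHb1
  have hdAle : dA ≤ Ha := by
    rw [hHa]
    exact le_mul_of_one_le_right (le_trans zero_le_one h1dA) (mulge _ _ h1Ma h1Ma')
  -- master inequality
  have K1 : 1 ≤ dA * dA * dB * dB * (e1 * e2 * e3 * e4) := by
    have h := one_le_v_phi hv hRr0
    have heq : v (φ Fq Rr) = dA * dA * dB * dB * (e1 * e2 * e3 * e4) := by
      rw [hRid]
      simp only [hv.map_mul]
      ring
    exact heq ▸ h
  -- discriminant inequality
  have K4 : 1 ≤ dA * t := by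
    have h := one_le_v_phi hv hD0
    have heq : v (φ Fq D) = (dA * t) * (dA * t) := by
      rw [hDid]; simp only [hv.map_mul]; rfl
    rw [heq] at h
    exact sq_ge_one' (mul_nonneg (le_trans zero_le_one h1dA) ht0.le) h
  -- difference bounds
  have b2 : e2 ≤ Ma * Mb' := v_sub_le_mul hv α β'
  have b3 : e3 ≤ Ma' * Mb := v_sub_le_mul hv α' β
  have b4 : e4 ≤ Ma' * Mb' := v_sub_le_mul hv α' β'
  have b3' : e3 ≤ max t e1 := by
    have h := hv.add_le (-(α - α')) (α - β)
    rw [show -(α - α') + (α - β) = α' - β by ring, v_neg hv] at h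
    exact h
  -- G1
  have G1 : 1 ≤ e1 * (Ha ^ 2 * Hb ^ 2) := by
    have step1 : e2 * (e3 * e4) ≤ (Ma * Mb') * ((Ma' * Mb) * (Ma' * Mb')) := by
      apply mul_le_mul b2 (mul_le_mul b3 b4 he4nn (by positivity))
        (by positivity) (by positivity)
    have step2 : dA * dA * dB * dB * ((Ma * Mb') * ((Ma' * Mb) * (Ma' * Mb'))) * (Ma * Mb)
        = Ha ^ 2 * Hb ^ 2 := by rw [hHa, hHb]; ring
    calc (1:ℝ) ≤ dA * dA * dB * dB * (e1 * e2 * e3 * e4) := K1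
      _ = e1 * (dA * dA * dB * dB * (e2 * (e3 * e4))) := by ring
      _ ≤ e1 * (dA * dA * dB * dB * ((Ma * Mb') * ((Ma' * Mb) * (Ma' * Mb')))) := by
          apply mul_le_mul_of_nonneg_left _ he1nn
          apply mul_le_mul_of_nonneg_left step1 (by positivity)
      _ ≤ e1 * (dA * dA * dB * dB * ((Ma * Mb') * ((Ma' * Mb) * (Ma' * Mb')))) * (Ma * Mb) := by
          apply le_mul_of_one_le_right _ (mulge _ _ h1Ma h1Mb)
          positivity
      _ = e1 * (Ha ^ 2 * Hb ^ 2) := by rw [← step2]; ring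
  -- G2
  have G2 : 1 ≤ e1 * t * (Ha ^ 2 * Hb ^ 2) := by
    have hbase : ∀ c : ℝ, 0 ≤ c → e3 ≤ c →
        1 ≤ (e1 * c) * (dA * dA * dB * dB * ((Ma * Mb') * (Ma' * Mb'))) := by
      intro c hc he3c
      calc (1:ℝ) ≤ dA * dA * dB * dB * (e1 * e2 * e3 * e4) := K1
        _ = (e1 * e3) * (dA * dA * dB * dB * (e2 * e4)) := by ring
        _ ≤ (e1 * c) * (dA * dA * dB * dB * ((Ma * Mb') * (Ma' * Mb'))) := by
            apply mul_le_mul (mul_le_mul_of_nonneg_left he3c he1nn)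
            · apply mul_le_mul_of_nonneg_left
                (mul_le_mul b2 b4 he4nn (by positivity)) (by positivity)
            · positivity
            · positivity
    have hfactor : dA * dA * dB * dB * ((Ma * Mb') * (Ma' * Mb')) * (Ma * Ma' * (Mb * Mb))
        = Ha ^ 2 * Hb ^ 2 := by rw [hHa, hHb]; ring
    rcases max_cases t e1 with ⟨hmax, _⟩ | ⟨hmax, _⟩
    · -- e3 ≤ t
      have h := hbase t ht0.le (hmax ▸ b3')
      calc (1:ℝ) ≤ (e1 * t) * (dA * dA * dB * dB * ((Ma * Mb') * (Ma' * Mb'))) := h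
        _ ≤ (e1 * t) * (dA * dA * dB * dB * ((Ma * Mb') * (Ma' * Mb')))
            * (Ma * Ma' * (Mb * Mb)) := by
            apply le_mul_of_one_le_right
            · positivity
            · exact mulge _ _ (mulge _ _ h1Ma h1Ma') (mulge _ _ h1Mb h1Mb)
        _ = e1 * t * (Ha ^ 2 * Hb ^ 2) := by rw [← hfactor]; ring
    · -- e3 ≤ e1
      have h := hbase e1 he1nn (hmax ▸ b3')
      have hsq : 1 ≤ (e1 * Ha * Hb) * (e1 * Ha * Hb) := by
        calc (1:ℝ) ≤ (e1 * e1) * (dA * dA * dB * dB * ((Ma * Mb') * (Ma' * Mb'))) := h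
          _ ≤ (e1 * e1) * (dA * dA * dB * dB * ((Ma * Mb') * (Ma' * Mb')))
              * (Ma * Ma' * (Mb * Mb)) := by
              apply le_mul_of_one_le_right
              · positivity
              · exact mulge _ _ (mulge _ _ h1Ma h1Ma') (mulge _ _ h1Mb h1Mb)
          _ = (e1 * Ha * Hb) * (e1 * Ha * Hb) := by rw [hHa, hHb]; ring
      have h1 : 1 ≤ e1 * Ha * Hb :=
        sq_ge_one' (mul_nonneg (mul_nonneg he1nn hHapos.le) hHbpos.le) hsq
      have h2 : 1 ≤ Ha * t :=
        le_trans K4 (mul_le_mul_of_nonneg_right hdAle ht0.le)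
      calc (1:ℝ) ≤ (e1 * Ha * Hb) * ((Ha * t) * Hb) :=
            mulge _ _ h1 (mulge _ _ h2 hHb1)
        _ = e1 * t * (Ha ^ 2 * Hb ^ 2) := by ring
  -- conclusion
  have hrpa : Ha ^ (-(2:ℝ)) = (Ha ^ (2:ℕ))⁻¹ := by
    rw [show (-(2:ℝ)) = -((2:ℕ):ℝ) by norm_num, Real.rpow_neg hHapos.le, Real.rpow_natCast]
  have hrpb : Hb ^ (-(2:ℝ)) = (Hb ^ (2:ℕ))⁻¹ := by
    rw [show (-(2:ℝ)) = -((2:ℕ):ℝ) by norm_num, Real.rpow_neg hHbpos.le, Real.rpow_natCast]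
  rw [hrpa, hrpb]
  rcases le_total (t⁻¹) 1 with hcase | hcase
  · rw [max_eq_left hcase, one_mul, ← mul_inv, ← one_div, div_le_iff₀ (by positivity)]
    calc (1:ℝ) ≤ e1 * (Ha ^ 2 * Hb ^ 2) := G1
      _ = e1 * (Ha ^ (2:ℕ) * Hb ^ (2:ℕ)) := by norm_num
  · rw [max_eq_right hcase, ← mul_inv, ← mul_inv, ← one_div, div_le_iff₀ (by positivity)]
    calc (1:ℝ) ≤ e1 * t * (Ha ^ 2 * Hb ^ 2) := G2
      _ = e1 * (t * Ha ^ (2:ℕ) * Hb ^ (2:ℕ)) := by norm_num; ring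


end Ooto
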